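/- Let D be a unital C*-algebra, p ∈ D a self-adjoint projection, and w ∈ D a contraction with ‖w*w - 1‖ < ε and ‖ww* - p‖ < ε, where ε < 1/15. Then there exists u ∈ D with u*u = 1, uu* = p, and ‖u - w‖ < 12ε. -/

import Mathlib

open Pointwise

section RingIds
variable {R : Type*} [Ring R] (p q : R) (hp : p*p = p) (hq : q*q = q)
include hp hq

set_option linter.unusedSectionVars false

lemma my_ring_id1 : (p*q + (1-p)*(1-q)) * (q*p + (1-q)*(1-p)) = 1 - (p-q)*(p-q) := by
  have hp2 : ∀ x : R, p*(p*x) = p*x := fun x => by rw [← mul_assoc, hp]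
  have hq2 : ∀ x : R, q*(q*x) = q*x := fun x => by rw [← mul_assoc, hq]
  simp only [mul_add, add_mul, mul_sub, sub_mul, mul_one, one_mul, mul_assoc, hp, hq, hp2, hq2]
  abel

lemma my_ring_id2 : p * (1 - (p-q)*(p-q)) = (1 - (p-q)*(p-q)) * p := by
  have hp2 : ∀ x : R, p*(p*x) = p*x := fun x => by rw [← mul_assoc, hp]
  have hq2 : ∀ x : R, q*(q*x) = q*x := fun x => by rw [← mul_assoc, hq]
  simp only [mul_add, add_mul, mul_sub, sub_mul, mul_one, one_mul, mul_assoc, hp, hq, hp2, hq2]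
  abel

lemma my_ring_id3 : (q*p + (1-q)*(1-p)) * p = q * (q*p + (1-q)*(1-p)) := by
  have hp2 : ∀ x : R, p*(p*x) = p*x := fun x => by rw [← mul_assoc, hp]
  have hq2 : ∀ x : R, q*(q*x) = q*x := fun x => by rw [← mul_assoc, hq]
  simp only [mul_add, add_mul, mul_sub, sub_mul, mul_one, one_mul, mul_assoc, hp, hq, hp2, hq2]
  abel

lemma my_ring_id4 : (q*p + (1-q)*(1-p)) - 1 = (q + q - 1) * (p - q) := by
  have hq2 : ∀ x : R, q*(q*x) = q*x := fun x => by rw [← mul_assoc, hq]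
  simp only [mul_add, add_mul, mul_sub, sub_mul, mul_one, one_mul, mul_assoc, hp, hq, hq2]
  abel

lemma my_ring_id5 : (q + q - 1) * (q + q - 1) = 1 := by
  have hq2 : ∀ x : R, q*(q*x) = q*x := fun x => by rw [← mul_assoc, hq]
  simp only [mul_add, add_mul, mul_sub, sub_mul, mul_one, one_mul, mul_assoc, hq, hq2]
  abel

end RingIds

section CStar
variable {D : Type*} [CStarAlgebra D]

lemma my_commute_cfc (r a : D) (ha : IsSelfAdjoint a) (h : Commute r a) (f : ℝ → ℝ) :
    Commute r (cfc f a) := by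
  by_cases hf : ContinuousOn f (spectrum ℝ a)
  · rw [cfc_apply f a ha hf]
    have hC : Continuous (cfcHom ha (R := ℝ)) := (cfcHom_isClosedEmbedding ha).continuous
    induction (ContinuousMap.mk _ hf.restrict : C(spectrum ℝ a, ℝ)) using
        ContinuousMap.induction_on_of_compact with
    | const c =>
      have hc : (ContinuousMap.const (spectrum ℝ a) c) = algebraMap ℝ C(spectrum ℝ a, ℝ) c := by
        ext; simp
      rw [hc, AlgHomClass.commutes]
      exact (Algebra.commutes c r).symm
    | id => rw [cfcHom_id ha]; exact h
    | star_id => simp only [star_trivial]; rw [cfcHom_id ha]; exact h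
    | add f g hfc hgc => rw [map_add]; exact hfc.add_right hgc
    | mul f g hfc hgc => rw [map_mul]; exact hfc.mul_right hgc
    | frequently g hfreq =>
      have hclosed : IsClosed {g : C(spectrum ℝ a, ℝ) | Commute r (cfcHom ha g)} := by
        have : IsClosed {x : D | Commute r x} := isClosed_eq (by continuity) (by continuity)
        exact this.preimage hC
      exact hclosed.closure_subset (mem_closure_iff_frequently.mpr hfreq)
  · rw [cfc_apply_of_not_continuousOn a hf]; exact Commute.zero_right r

lemma my_spec_bound [Nontrivial D] {a : D} {x : ℝ} (hx : x ∈ spectrum ℝ a) :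
    |x - 1| ≤ ‖a - 1‖ := by
  have h1 : x - 1 ∈ spectrum ℝ a - ({1} : Set ℝ) := Set.sub_mem_sub hx rfl
  rw [spectrum.sub_singleton_eq] at h1
  rw [map_one] at h1
  simpa using spectrum.norm_le_norm_of_mem h1

lemma my_inv_sqrt_aux [Nontrivial D] (x : D) (δ : ℝ) (hδ : δ ≤ 1/2) (hb : ‖star x * x - 1‖ ≤ δ) :
    ∃ s : D, IsSelfAdjoint s ∧ s * (star x * x) * s = 1 ∧ ‖s - 1‖ ≤ δ ∧ IsUnit s ∧
      ∀ r : D, Commute r (star x * x) → Commute r s := by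
  set b := star x * x with hbdef
  have hδ0 : 0 ≤ δ := le_trans (norm_nonneg _) hb
  have hb_sa : IsSelfAdjoint b := IsSelfAdjoint.star_mul_self x
  have hspec : ∀ t ∈ spectrum ℝ b, 1 - δ ≤ t ∧ t ≤ 1 + δ := by
    intro t ht
    have := abs_le.mp <| (my_spec_bound ht).trans hb
    constructor <;> linarith [this.1, this.2]
  have hpos : ∀ t ∈ spectrum ℝ b, (0:ℝ) < t := fun t ht => by
    have := (hspec t ht).1; linarith
  set f : ℝ → ℝ := fun t => (Real.sqrt t)⁻¹ with hfdef
  have hsqrt_pos : ∀ t ∈ spectrum ℝ b, 0 < Real.sqrt t := fun t ht =>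
    Real.sqrt_pos.mpr (hpos t ht)
  have hf : ContinuousOn f (spectrum ℝ b) :=
    Real.continuous_sqrt.continuousOn.inv₀ (fun t ht => (hsqrt_pos t ht).ne')
  refine ⟨cfc f b, cfc_predicate f b, ?_, ?_, ?_, fun r hr => my_commute_cfc r b hb_sa hr f⟩
  · have h1 : cfc f b * cfc (id : ℝ → ℝ) b * cfc f b = 1 := by
      rw [← cfc_mul f id b hf continuousOn_id, ← cfc_mul (fun x => f x * id x) f b (hf.mul continuousOn_id) hf]
      rw [show (1 : D) = cfc (fun _ : ℝ => (1:ℝ)) b from (cfc_const 1 b hb_sa).trans (map_one _) |>.symm]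
      apply cfc_congr
      intro t ht
      have hs := Real.mul_self_sqrt (hpos t ht).le
      have hne := (hsqrt_pos t ht).ne'
      simp only [f, id]
      field_simp
      rw [sq, hs]
    rwa [cfc_id ℝ b hb_sa] at h1
  · have heq : cfc f b - 1 = cfc (fun t => f t - 1) b := by
      rw [cfc_sub f (fun _ => (1:ℝ)) b hf continuousOn_const,
        (cfc_const 1 b hb_sa).trans (map_one _)]
    rw [heq]
    apply norm_cfc_le hδ0
    intro t ht
    obtain ⟨hlo, hhi⟩ := hspec t ht
    set u := Real.sqrt t with hu
    have hu0 : 0 < u := hsqrt_pos t ht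
    have hu2 : u * u = t := Real.mul_self_sqrt (hpos t ht).le
    have habs : u⁻¹ - 1 = (1 - u) * u⁻¹ := by field_simp
    rw [Real.norm_eq_abs]
    show |u⁻¹ - 1| ≤ δ
    rw [habs, abs_mul, abs_inv, abs_of_pos hu0]
    rw [show δ = (δ * u) * u⁻¹ by field_simp]
    apply mul_le_mul_of_nonneg_right _ (by positivity)
    rw [abs_le]
    constructor
    · nlinarith [sq_nonneg (u - 1), mul_nonneg hδ0 hu0.le]
    · nlinarith [sq_nonneg (u - 1), mul_nonneg hδ0 hu0.le, mul_nonneg (mul_nonneg hδ0 hδ0) hu0.le,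
        mul_nonneg (mul_nonneg (mul_nonneg hδ0 hδ0) hδ0) hu0.le]
  · have h1 : cfc f b * cfc Real.sqrt b = 1 := by
      rw [← cfc_mul f Real.sqrt b hf Real.continuous_sqrt.continuousOn]
      rw [show (1 : D) = cfc (fun _ : ℝ => (1:ℝ)) b from (cfc_const 1 b hb_sa).trans (map_one _) |>.symm]
      exact cfc_congr fun t ht => inv_mul_cancel₀ (hsqrt_pos t ht).ne'
    exact ⟨⟨cfc f b, cfc Real.sqrt b, h1, ((cfc_commute_cfc f Real.sqrt b).symm.eq).trans h1⟩, rfl⟩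

end CStar

/-- In a unital C*-algebra, if `p` is a self-adjoint projection and `w` is a contraction with
`‖w*w - 1‖ < ε` and `‖ww* - p‖ < ε` for some `ε < 1/15`, then there is a partial isometry `u`
with `u*u = 1`, `uu* = p` and `‖u - w‖ < 12ε`. -/
theorem exists_partial_isometry_near {D : Type*} [NormedRing D] [StarRing D] [CStarRing D]
    [CompleteSpace D] [NormedAlgebra ℂ D] [StarModule ℂ D]
    (p w : D) (hp_sa : IsSelfAdjoint p) (hp_idem : IsIdempotentElem p)
    (hw : ‖w‖ ≤ 1) (ε : ℝ) (h1 : ‖star w * w - 1‖ < ε) (h2 : ‖w * star w - p‖ < ε)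
    (hε : ε < 1 / 15) :
    ∃ u : D, star u * u = 1 ∧ u * star u = p ∧ ‖u - w‖ < 12 * ε := by
  have hε0 : 0 < ε := lt_of_le_of_lt (norm_nonneg _) h1
  rcases subsingleton_or_nontrivial D with hD | hD
  · exact ⟨w, Subsingleton.elim _ _, Subsingleton.elim _ _, by
      rw [sub_self, norm_zero]; positivity⟩
  letI : CStarAlgebra D := {}
  have hpp : p * p = p := hp_idem
  -- Step 1: polar decomposition of w
  obtain ⟨s, hs_sa, hs_mul, hs_norm, -, -⟩ :=
    my_inv_sqrt_aux w ‖star w * w - 1‖ (by linarith) le_rfl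
  obtain ⟨u₀, hu₀⟩ : ∃ x : D, x = w * s := ⟨_, rfl⟩
  have huu : star u₀ * u₀ = 1 := by
    have e : star u₀ * u₀ = s * (star w * w) * s := by
      rw [hu₀, star_mul, hs_sa.star_eq]; noncomm_ring
    rw [e, hs_mul]
  have hu_norm : ‖u₀‖ = 1 := by
    have h := CStarRing.norm_star_mul_self (x := u₀)
    rw [huu, norm_one] at h
    nlinarith [norm_nonneg u₀]
  have huw : ‖u₀ - w‖ < ε := by
    have e : u₀ - w = w * (s - 1) := by rw [hu₀]; noncomm_ring
    calc ‖u₀ - w‖ = ‖w * (s-1)‖ := by rw [e]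
      _ ≤ ‖w‖ * ‖s - 1‖ := norm_mul_le _ _
      _ ≤ 1 * ‖star w * w - 1‖ := mul_le_mul hw hs_norm (norm_nonneg _) zero_le_one
      _ < ε := by rw [one_mul]; exact h1
  -- Step 2: the projection q
  obtain ⟨q, hqdef⟩ : ∃ x : D, x = u₀ * star u₀ := ⟨_, rfl⟩
  have hq_sa : IsSelfAdjoint q := hqdef ▸ IsSelfAdjoint.mul_star_self u₀
  have hqq : q * q = q := by
    rw [hqdef]
    calc u₀ * star u₀ * (u₀ * star u₀) = u₀ * (star u₀ * u₀) * star u₀ := by noncomm_ring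
    _ = u₀ * star u₀ := by rw [huu, mul_one]
  have hqp : ‖q - p‖ < 3 * ε := by
    have e : q - p = u₀ * star (u₀ - w) + (u₀ - w) * star w + (w * star w - p) := by
      rw [star_sub]; rw [hqdef]; noncomm_ring
    have b1 : ‖u₀ * star (u₀ - w)‖ ≤ ‖u₀ - w‖ := by
      calc ‖u₀ * star (u₀ - w)‖ ≤ ‖u₀‖ * ‖star (u₀ - w)‖ := norm_mul_le _ _
      _ = ‖u₀ - w‖ := by rw [hu_norm, one_mul, norm_star]
    have b2 : ‖(u₀ - w) * star w‖ ≤ ‖u₀ - w‖ := by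
      calc ‖(u₀ - w) * star w‖ ≤ ‖u₀ - w‖ * ‖star w‖ := norm_mul_le _ _
      _ ≤ ‖u₀ - w‖ * 1 := by
          apply mul_le_mul_of_nonneg_left _ (norm_nonneg _)
          rw [norm_star]; exact hw
      _ = ‖u₀ - w‖ := mul_one _
    calc ‖q - p‖ ≤ ‖u₀ * star (u₀ - w) + (u₀ - w) * star w‖ + ‖w * star w - p‖ := by
          rw [e]; exact norm_add_le _ _
      _ ≤ ‖u₀ * star (u₀ - w)‖ + ‖(u₀ - w) * star w‖ + ‖w * star w - p‖ := by
          gcongr; exact norm_add_le _ _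
      _ < 3 * ε := by linarith
  have hd1 : ‖p - q‖ < 3 * ε := by rw [norm_sub_rev]; exact hqp
  have hd5 : ‖p - q‖ < 1/5 := by linarith
  have hd0 : 0 ≤ ‖p - q‖ := norm_nonneg _
  -- Step 3: the intertwiner a
  obtain ⟨a, hadef⟩ : ∃ x : D, x = q * p + (1 - q) * (1 - p) := ⟨_, rfl⟩
  have ha_star : star a = p * q + (1 - p) * (1 - q) := by
    rw [hadef]
    simp [star_add, star_mul, star_sub, star_one, hp_sa.star_eq, hq_sa.star_eq]
  have hca : star a * a = 1 - (p - q) * (p - q) := by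
    rw [ha_star, hadef]; exact my_ring_id1 p q hpp hqq
  have hcomm : Commute p (star a * a) := by
    rw [hca]; exact my_ring_id2 p q hpp hqq
  have ha_sub : a - 1 = (q + q - 1) * (p - q) := by
    rw [hadef]; exact my_ring_id4 p q hpp hqq
  have h2q_norm : ‖q + q - 1‖ ≤ 1 := by
    have hsa : star (q + q - 1) = q + q - 1 := by
      simp [star_sub, star_add, star_one, hq_sa.star_eq]
    have hsq : (q + q - 1) * (q + q - 1) = 1 := my_ring_id5 p q hpp hqq
    have hn : ‖q + q - 1‖ * ‖q + q - 1‖ = 1 := by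
      rw [← CStarRing.norm_star_mul_self (x := q + q - 1), hsa, hsq, norm_one]
    nlinarith [norm_nonneg (q + q - 1)]
  have ha_norm : ‖a - 1‖ ≤ ‖p - q‖ := by
    rw [ha_sub]
    calc ‖(q + q - 1) * (p - q)‖ ≤ ‖q + q - 1‖ * ‖p - q‖ := norm_mul_le _ _
    _ ≤ 1 * ‖p - q‖ := mul_le_mul_of_nonneg_right h2q_norm hd0
    _ = ‖p - q‖ := one_mul _
  have ha_unit : IsUnit a := by
    have hlt : ‖1 - a‖ < 1 := by
      rw [norm_sub_rev]; exact lt_of_le_of_lt ha_norm (by linarith)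
    simpa [sub_sub_cancel] using (Units.oneSub (1 - a) hlt).isUnit
  have hcan : ‖star a * a - 1‖ ≤ ‖p - q‖ * ‖p - q‖ := by
    rw [hca]
    have e : (1:D) - (p-q)*(p-q) - 1 = -((p-q)*(p-q)) := by noncomm_ring
    rw [e, norm_neg]
    have hpq_sa : star (p - q) = p - q := by
      simp [star_sub, hp_sa.star_eq, hq_sa.star_eq]
    nth_rewrite 1 [← hpq_sa]
    rw [CStarRing.norm_star_mul_self]
  -- Step 4: polar decomposition of a
  obtain ⟨t, ht_sa, ht_mul, ht_norm, ht_unit, ht_comm⟩ :=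
    my_inv_sqrt_aux a (‖p - q‖ * ‖p - q‖) (by nlinarith) hcan
  obtain ⟨z, hz⟩ : ∃ x : D, x = a * t := ⟨_, rfl⟩
  have hzz : star z * z = 1 := by
    have e : star z * z = t * (star a * a) * t := by
      rw [hz, star_mul, ht_sa.star_eq]; noncomm_ring
    rw [e, ht_mul]
  have hz_unit : IsUnit z := hz ▸ ha_unit.mul ht_unit
  have hzz' : z * star z = 1 := by
    have h3 : (z * star z) * z = 1 * z := by rw [mul_assoc, hzz, mul_one, one_mul]
    exact hz_unit.mul_left_inj.mp h3
  have hanorm2 : ‖a‖ ≤ 2 := by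
    calc ‖a‖ = ‖(a - 1) + 1‖ := by rw [sub_add_cancel]
    _ ≤ ‖a - 1‖ + ‖(1:D)‖ := norm_add_le _ _
    _ ≤ ‖p - q‖ + 1 := by rw [norm_one]; linarith
    _ ≤ 2 := by linarith
  have hz1 : ‖z - 1‖ ≤ ‖p - q‖ + 2 * (‖p - q‖ * ‖p - q‖) := by
    have e : z - 1 = a * (t - 1) + (a - 1) := by rw [hz]; noncomm_ring
    calc ‖z - 1‖ ≤ ‖a * (t - 1)‖ + ‖a - 1‖ := by rw [e]; exact norm_add_le _ _
    _ ≤ ‖a‖ * ‖t - 1‖ + ‖p - q‖ := by gcongr; exact norm_mul_le _ _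
    _ ≤ 2 * (‖p - q‖ * ‖p - q‖) + ‖p - q‖ :=
        add_le_add_left (mul_le_mul hanorm2 ht_norm (norm_nonneg _) (by norm_num)) _
    _ = ‖p - q‖ + 2 * (‖p - q‖ * ‖p - q‖) := by ring
  -- Step 5: intertwining
  have hap : a * p = q * a := by rw [hadef]; exact my_ring_id3 p q hpp hqq
  have hpt : Commute p t := ht_comm p hcomm
  have hzp : z * p = q * z := by
    calc z * p = a * (t * p) := by rw [hz, mul_assoc]
    _ = a * (p * t) := by rw [hpt.symm.eq]
    _ = (a * p) * t := by rw [mul_assoc]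
    _ = (q * a) * t := by rw [hap]
    _ = q * z := by rw [hz, mul_assoc]
  -- Conclusion
  refine ⟨star z * u₀, ?_, ?_, ?_⟩
  · calc star (star z * u₀) * (star z * u₀)
        = star u₀ * (z * star z) * u₀ := by rw [star_mul, star_star]; noncomm_ring
      _ = 1 := by rw [hzz', mul_one, huu]
  · calc (star z * u₀) * star (star z * u₀)
        = star z * ((u₀ * star u₀) * z) := by rw [star_mul, star_star]; noncomm_ring
      _ = star z * (z * p) := by rw [← hqdef, ← hzp]
      _ = (star z * z) * p := by rw [mul_assoc]
      _ = p := by rw [hzz, one_mul]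
  · have e : star z * u₀ - w = (star z - 1) * u₀ + (u₀ - w) := by noncomm_ring
    have hzs : ‖star z - 1‖ = ‖z - 1‖ := by
      rw [show star z - 1 = star (z - 1) by rw [star_sub, star_one], norm_star]
    calc ‖star z * u₀ - w‖
        ≤ ‖(star z - 1) * u₀‖ + ‖u₀ - w‖ := by rw [e]; exact norm_add_le _ _
      _ ≤ ‖star z - 1‖ * ‖u₀‖ + ‖u₀ - w‖ := add_le_add_left (norm_mul_le _ _) _
      _ = ‖z - 1‖ + ‖u₀ - w‖ := by rw [hzs, hu_norm, mul_one]
      _ < 12 * ε := by nlinarith [hz1, huw, hd1, hd5, hd0, hε0]
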